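/- The canonical substitution is a solution: define C₁ = ⋀_{i=1}^m F[x:=u_i] and C_{r+1} = ⋀_{j=1}^{k_r} C_r[α_r:=s_{r,j}] for r = 1,…,n. If the conjunction of all instances F[x:=u_i][α₁:=s_{1,j₁}]⋯[αₙ:=s_{n,jₙ}] (over all 1 ≤ i ≤ m and all choices 1 ≤ j_l ≤ k_l) is unsatisfiable, then the sequent F[x:=u₁],…,F[x:=u_m], C₁ ⊃ ⋀_{j=1}^{k₁} C₁[α₁:=s_{1,j}], …, Cₙ ⊃ ⋀_{j=1}^{kₙ} Cₙ[αₙ:=s_{n,j}] ⊢ is a tautology; moreover Var(C_i) ⊆ {α_i,…,αₙ} for every i, so this sequent is an extended Herbrand-sequent of ∀x F ⊢. -/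

import Mathlib

open FirstOrder Language

/-- Conjunction of a list of formulas. -/
def conjList {L : FirstOrder.Language} {β : Type} : List (L.Formula β) → L.Formula β :=
  fun l => l.foldr (fun φ ψ => φ ⊓ ψ) ⊤

/-- The instance `F[x:=u_i][α₀:=s₀,ⱼ₀]⋯[α_{n-1}:=s_{n-1},j_{n-1}]`. -/
def herbrandInstance (L : FirstOrder.Language) (n m : ℕ)
    (F : L.Formula (Fin 1)) (u : Fin m → L.Term (Fin n))
    (k : Fin n → ℕ) (s : (i : Fin n) → Fin (k i) → L.Term (Fin n))
    (i : Fin m) (j : (r : Fin n) → Fin (k r)) : L.Formula (Fin n) :=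
  (List.finRange n).foldl
    (fun φ r => φ.subst (Function.update Term.var r (s r (j r))))
    (F.subst (fun _ => u i))

/-- The formulas of the canonical substitution: `canonicalC … 0 = C₁ = ⋀_i F[x:=u_i]`
and `canonicalC … (r+1) = C_{r+2} = ⋀_j C_{r+1}[α_{r+1}:=s_{r+1,j}]` (0-indexed: the
paper's `C_{r+1}` is `canonicalC … r`). -/
def canonicalC (L : FirstOrder.Language) (n m : ℕ)
    (F : L.Formula (Fin 1)) (u : Fin m → L.Term (Fin n))
    (k : Fin n → ℕ) (s : (i : Fin n) → Fin (k i) → L.Term (Fin n)) :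
    ℕ → L.Formula (Fin n)
  | 0 => conjList ((List.finRange m).map (fun i => F.subst (fun _ => u i)))
  | r + 1 =>
    if h : r < n then
      conjList ((List.finRange (k ⟨r, h⟩)).map
        (fun j => (canonicalC L n m F u k s r).subst
          (Function.update Term.var ⟨r, h⟩ (s ⟨r, h⟩ j))))
    else canonicalC L n m F u k s r


set_option linter.unusedVariables false

namespace HerbrandAux

open FirstOrder.Language

variable {L : FirstOrder.Language} {α β : Type}

lemma varFinset_relabel_inl [DecidableEq α] {γ : Type} (t : L.Term α) :
    (Term.relabel (Sum.inl : α → α ⊕ γ) t).varFinsetLeft = t.varFinset := by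
  induction t with
  | var a => simp [Term.relabel, Term.varFinset, Term.varFinsetLeft]
  | func f ts ih => simp [Term.relabel, Term.varFinset, Term.varFinsetLeft, ih]

lemma varFinsetLeft_subst [DecidableEq α] [DecidableEq β] {nn : ℕ}
    (t : L.Term (α ⊕ Fin nn)) (tf : α → L.Term β) :
    (t.subst (Sum.elim (Term.relabel Sum.inl ∘ tf) (Term.var ∘ Sum.inr))).varFinsetLeft ⊆
      t.varFinsetLeft.biUnion fun a => (tf a).varFinset := by
  induction t with
  | var a =>
    cases a with
    | inl a =>
      intro x hx
      rw [Term.subst] at hx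
      simp only [Sum.elim_inl, Function.comp_apply, varFinset_relabel_inl] at hx
      exact Finset.mem_biUnion.2 ⟨a, by simp [Term.varFinsetLeft], hx⟩
    | inr b =>
      intro x hx
      rw [Term.subst] at hx
      simp only [Sum.elim_inr, Function.comp_apply, Term.varFinsetLeft] at hx
      exact absurd hx (Finset.notMem_empty x)
  | func f ts ih =>
    intro x hx
    rw [Term.subst] at hx
    obtain ⟨i, -, hi⟩ := Finset.mem_biUnion.1 hx
    obtain ⟨a, ha, hxa⟩ := Finset.mem_biUnion.1 (ih i hi)
    exact Finset.mem_biUnion.2 ⟨a, Finset.mem_biUnion.2 ⟨i, Finset.mem_univ i, ha⟩, hxa⟩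

lemma freeVarFinset_subst [DecidableEq α] [DecidableEq β] :
    ∀ {nn : ℕ} (φ : L.BoundedFormula α nn) (tf : α → L.Term β),
    (φ.subst tf).freeVarFinset ⊆ φ.freeVarFinset.biUnion fun a => (tf a).varFinset := by
  intro nn φ
  induction φ with
  | falsum => intro tf x hx; exact absurd hx (Finset.notMem_empty x)
  | equal t₁ t₂ =>
    intro tf x hx
    rcases Finset.mem_union.1 hx with h | h
    · exact Finset.biUnion_subset_biUnion_of_subset_left _ Finset.subset_union_left
        (varFinsetLeft_subst t₁ tf h)
    · exact Finset.biUnion_subset_biUnion_of_subset_left _ Finset.subset_union_right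
        (varFinsetLeft_subst t₂ tf h)
  | rel R ts =>
    intro tf x hx
    obtain ⟨i, -, hi⟩ := Finset.mem_biUnion.1 hx
    refine Finset.biUnion_subset_biUnion_of_subset_left _ ?_ (varFinsetLeft_subst (ts i) tf hi)
    intro a ha
    exact Finset.mem_biUnion.2 ⟨i, Finset.mem_univ i, ha⟩
  | imp φ₁ φ₂ ih₁ ih₂ =>
    intro tf x hx
    rcases Finset.mem_union.1 hx with h | h
    · exact Finset.biUnion_subset_biUnion_of_subset_left _ Finset.subset_union_left (ih₁ tf h)
    · exact Finset.biUnion_subset_biUnion_of_subset_left _ Finset.subset_union_right (ih₂ tf h)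
  | all φ ih => intro tf; exact ih tf

lemma mem_foldr_union [DecidableEq β] {γT : Type} (g : γT → L.Formula β) (l : List γT) (x : β)
    (h : x ∈ (l.map g).foldr (fun φ s => φ.freeVarFinset ∪ s) ∅) :
    ∃ a ∈ l, x ∈ (g a).freeVarFinset := by
  induction l with
  | nil => exact absurd h (Finset.notMem_empty x)
  | cons a t ih =>
    rw [List.map_cons, List.foldr_cons] at h
    rcases Finset.mem_union.1 h with h | h
    · exact ⟨a, List.mem_cons_self, h⟩
    · obtain ⟨b, hb, hxb⟩ := ih h
      exact ⟨b, List.mem_cons_of_mem a hb, hxb⟩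

lemma freeVarFinset_conjList [DecidableEq β] (l : List (L.Formula β)) :
    (conjList l).freeVarFinset ⊆ l.foldr (fun φ s => φ.freeVarFinset ∪ s) ∅ := by
  induction l with
  | nil => simp [conjList, Top.top, BoundedFormula.not]
  | cons φ t ih =>
    simp only [conjList, List.foldr_cons] at ih ⊢
    intro γ hγ
    simp only [Min.min, BoundedFormula.not, BoundedFormula.freeVarFinset,
      Finset.union_empty, Finset.mem_union] at hγ
    rcases hγ with h | h
    · exact Finset.mem_union_left _ h
    · exact Finset.mem_union_right _ (ih h)

lemma realize_conjList {M : Type} [L.Structure M] (l : List (L.Formula β)) (v : β → M) :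
    (conjList l).Realize v ↔ ∀ φ ∈ l, φ.Realize v := by
  induction l with
  | nil => simp [conjList, Formula.realize_top]
  | cons φ t ih =>
    simp only [conjList] at ih ⊢
    rw [List.foldr_cons, Formula.realize_inf, ih]
    simp

lemma formula_realize_subst {M : Type} [L.Structure M] (φ : L.Formula α) (tf : α → L.Term β)
    (v : β → M) :
    Formula.Realize (M := M) (φ.subst tf) v ↔
      Formula.Realize (M := M) φ (fun a => (tf a).realize v) :=
  BoundedFormula.realize_subst

/-- apply a chain of substitutions to a valuation -/
def chainVal {M : Type} [L.Structure M] : List (α → L.Term α) → (α → M) → (α → M)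
  | [], v => v
  | σ :: t, v => fun a => (σ a).realize (chainVal t v)

lemma chainVal_append {M : Type} [L.Structure M] (l₁ l₂ : List (α → L.Term α)) (v : α → M) :
    chainVal (l₁ ++ l₂) v = chainVal l₁ (chainVal l₂ v) := by
  induction l₁ with
  | nil => rfl
  | cons σ t ih =>
    show (fun a => (σ a).realize (chainVal (t ++ l₂) v)) = _
    rw [ih]
    rfl

lemma realize_foldl_subst {M : Type} [L.Structure M] (l : List (α → L.Term α))
    (φ : L.Formula α) (v : α → M) :
    Formula.Realize (M := M) (l.foldl (fun ψ σ => ψ.subst σ) φ) v ↔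
      Formula.Realize (M := M) φ (chainVal l v) := by
  induction l generalizing φ with
  | nil => rfl
  | cons σ t ih =>
    rw [List.foldl_cons, ih, formula_realize_subst]
    rfl

end HerbrandAux

open HerbrandAux

/-- **the canonical substitution is a solution.**
With `C₁ = ⋀_i F[x:=u_i]` and `C_{r+1} = ⋀_j C_r[α_r:=s_{r,j}]` (0-indexed below): if
the conjunction of all instances `F[x:=u_i][α₁:=s_{1,j₁}]⋯[αₙ:=s_{n,jₙ}]` is
unsatisfiable, then the sequent
`F[x:=u₁],…,F[x:=u_m], C₁ ⊃ ⋀_j C₁[α₁:=s_{1,j}], …, Cₙ ⊃ ⋀_j Cₙ[αₙ:=s_{n,j}] ⊢`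
is a tautology; moreover `Var(C_i) ⊆ {α_i,…,αₙ}` for every `i`, so this sequent is an
extended Herbrand-sequent of `∀x F ⊢`. -/
theorem canonical_substitution_is_solution
    (L : FirstOrder.Language) (n m : ℕ)
    (F : L.Formula (Fin 1)) (hF : F.IsQF)
    (u : Fin m → L.Term (Fin n))
    (k : Fin n → ℕ)
    (s : (i : Fin n) → Fin (k i) → L.Term (Fin n))
    (hs : ∀ i j, ∀ γ ∈ (s i j).varFinset, i < γ)
    (hT : ∀ (M : Type) [L.Structure M] [Nonempty M] (v : Fin n → M),
        ¬ ∀ (i : Fin m) (j : (r : Fin n) → Fin (k r)),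
            Formula.Realize (M := M) (herbrandInstance L n m F u k s i j) v) :
    (∀ r : Fin n, ∀ γ ∈ (canonicalC L n m F u k s r).freeVarFinset, r ≤ γ) ∧
    (∀ (M : Type) [L.Structure M] [Nonempty M] (v : Fin n → M),
      ¬ ((∀ i : Fin m, Formula.Realize (M := M) (F.subst (fun _ => u i)) v) ∧
         (∀ r : Fin n,
            Formula.Realize (M := M) (canonicalC L n m F u k s r) v →
            ∀ j : Fin (k r),
              Formula.Realize (M := M)
                ((canonicalC L n m F u k s r).subst
                  (Function.update Term.var r (s r j))) v))) := by
  set C := canonicalC L n m F u k s with hC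
  have var_aux : ∀ r : ℕ, r ≤ n → ∀ γ ∈ (C r).freeVarFinset, r ≤ (γ : ℕ) := by
    intro r
    induction r with
    | zero => intro _ γ _; exact Nat.zero_le _
    | succ r ih =>
      intro hr γ hγ
      have hrn : r < n := hr
      rw [hC] at hγ
      simp only [canonicalC, dif_pos hrn] at hγ
      have h1 := freeVarFinset_conjList ((List.finRange (k ⟨r, hrn⟩)).map
        (fun j => (canonicalC L n m F u k s r).subst
          (Function.update Term.var ⟨r, hrn⟩ (s ⟨r, hrn⟩ j)))) hγ
      obtain ⟨j, -, hφ⟩ := mem_foldr_union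
        (fun j => (canonicalC L n m F u k s r).subst
          (Function.update Term.var ⟨r, hrn⟩ (s ⟨r, hrn⟩ j))) _ _ h1
      have h3 := freeVarFinset_subst (canonicalC L n m F u k s r)
        (Function.update Term.var ⟨r, hrn⟩ (s ⟨r, hrn⟩ j)) hφ
      obtain ⟨δ, hδ, hγδ⟩ := Finset.mem_biUnion.1 h3
      by_cases hδr : δ = ⟨r, hrn⟩
      · rw [hδr, Function.update_self] at hγδ
        have hlt : ((⟨r, hrn⟩ : Fin n) : ℕ) < (γ : ℕ) := hs ⟨r, hrn⟩ j γ hγδ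
        simp only at hlt
        omega
      · rw [Function.update_of_ne hδr] at hγδ
        simp only [Term.varFinset, Finset.mem_singleton] at hγδ
        subst hγδ
        have h4 := ih (le_of_lt hrn) γ hδ
        have hne : (γ : ℕ) ≠ r := fun h => hδr (Fin.ext h)
        omega
  constructor
  · intro r γ hγ
    exact var_aux r (le_of_lt r.isLt) γ hγ
  intro M _ _ v ⟨h1, h2⟩
  apply hT M v
  intro i j
  set σ : Fin n → (Fin n → L.Term (Fin n)) :=
    fun r => Function.update Term.var r (s r (j r)) with hσ
  have hCreal : ∀ r : ℕ, r ≤ n → Formula.Realize (M := M) (C r) v := by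
    intro r
    induction r with
    | zero =>
      intro _
      rw [hC]
      show Formula.Realize (M := M)
        (conjList ((List.finRange m).map (fun i => F.subst (fun _ => u i)))) v
      rw [realize_conjList]
      intro φ hφ
      obtain ⟨i', -, rfl⟩ := List.mem_map.1 hφ
      exact h1 i'
    | succ r ih =>
      intro hr
      have hrn : r < n := hr
      have hcr := ih (le_of_lt hrn)
      rw [hC]
      simp only [canonicalC, dif_pos hrn]
      rw [realize_conjList]
      intro φ hφ
      obtain ⟨j', -, rfl⟩ := List.mem_map.1 hφ
      exact h2 ⟨r, hrn⟩ hcr j'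
  have key : ∀ r : ℕ, r ≤ n → ∀ (w : Fin n → M), Formula.Realize (M := M) (C r) w →
      Formula.Realize (M := M) (F.subst (fun _ => u i))
        (chainVal (((List.finRange n).take r).map σ) w) := by
    intro r
    induction r with
    | zero =>
      intro _ w hw
      rw [hC] at hw
      simp only [canonicalC] at hw
      rw [realize_conjList] at hw
      exact hw _ (List.mem_map.2 ⟨i, List.mem_finRange i, rfl⟩)
    | succ r ih =>
      intro hr w hw
      have hrn : r < n := hr
      rw [hC] at hw
      simp only [canonicalC, dif_pos hrn] at hw
      rw [realize_conjList] at hw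
      have hw' := hw _ (List.mem_map.2 ⟨j ⟨r, hrn⟩, List.mem_finRange _, rfl⟩)
      rw [formula_realize_subst] at hw'
      have hstep := ih (le_of_lt hrn) _ hw'
      have htake : (List.finRange n).take (r + 1) =
          (List.finRange n).take r ++ [⟨r, hrn⟩] := by
        rw [List.take_succ]
        congr 1
        rw [List.getElem?_eq_getElem (by simpa using hrn)]
        simp
      rw [htake, List.map_append, chainVal_append]
      exact hstep
  have hfinal := key n le_rfl v (hCreal n le_rfl)
  rw [List.take_of_length_le (by simp)] at hfinal
  have hrw : ((List.finRange n).map σ).foldl (fun ψ τ => ψ.subst τ)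
      (F.subst fun _ => u i) = herbrandInstance L n m F u k s i j := by
    rw [List.foldl_map]
    rfl
  show Formula.Realize (M := M) (herbrandInstance L n m F u k s i j) v
  rw [← hrw, realize_foldl_subst]
  exact hfinal
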